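/- Let μ = (a+1, b-1) with a+1 > b-1 and b ≥ 3, and for 2 ≤ i ≤ b-1 let w_i = (a, 1^{i-2}, 3, 1^{b-1-i}) (content: a copies of 1, three copies of i, and one copy of every other entry in {2,…,b-1}). Then the number of standard tableaux of shape μ and content w_i equals b-2. -/

import Mathlib

/-- A standard tableau of two-row shape `(μ₁, μ₂)` with entries in `{1, …, n}`:
rows weakly increase left to right, columns strictly increase top to bottom. -/
structure TwoRowStandardTableau (μ1 μ2 n : ℕ) where
  row1 : Fin μ1 → ℕ
  row2 : Fin μ2 → ℕ
  row1_mem : ∀ p, 1 ≤ row1 p ∧ row1 p ≤ n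
  row2_mem : ∀ p, 1 ≤ row2 p ∧ row2 p ≤ n
  row1_mono : Monotone row1
  row2_mono : Monotone row2
  col_strict : ∀ (p : Fin μ2) (h : (p : ℕ) < μ1), row1 ⟨(p : ℕ), h⟩ < row2 p

/-- The content of a tableau: the number of occurrences of the entry `k`. -/
def TwoRowStandardTableau.content {μ1 μ2 n : ℕ} (T : TwoRowStandardTableau μ1 μ2 n)
    (k : ℕ) : ℕ :=
  (Finset.univ.filter fun p => T.row1 p = k).card +
    (Finset.univ.filter fun p => T.row2 p = k).card

namespace Stmt12Aux

lemma tableau_ext {μ1 μ2 n : ℕ} {T T' : TwoRowStandardTableau μ1 μ2 n}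
    (h1 : T.row1 = T'.row1) (h2 : T.row2 = T'.row2) : T = T' := by
  cases T; cases T'; cases h1; cases h2; rfl

lemma card_filter_eq_count {m : ℕ} (f : Fin m → ℕ) (k : ℕ) :
    (Finset.univ.filter fun p => f p = k).card = (List.ofFn f).count k := by
  classical
  have h1 : (List.ofFn f).count k = Multiset.count k (Multiset.map f Finset.univ.val) := by
    rw [Fin.univ_val_map]; exact (Multiset.coe_count _ _).symm
  rw [h1, Multiset.count_map, ← Finset.filter_val, Finset.card]
  simp [eq_comm]

lemma mono_eq_of_count {m : ℕ} {f g : Fin m → ℕ} (hf : Monotone f) (hg : Monotone g)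
    (h : ∀ k, (Finset.univ.filter fun p => f p = k).card
            = (Finset.univ.filter fun p => g p = k).card) : f = g := by
  have hperm : (List.ofFn f).Perm (List.ofFn g) :=
    List.perm_iff_count.2 fun k => by
      rw [← card_filter_eq_count, ← card_filter_eq_count]; exact h k
  exact List.ofFn_injective
    (hperm.eq_of_pairwise' (List.pairwise_ofFn.2 fun _ _ hij => hf hij.le)
      (List.pairwise_ofFn.2 fun _ _ hij => hg hij.le))

def listFn {m : ℕ} (l : List ℕ) (h : l.length = m) : Fin m → ℕ :=
  fun p => l.get (Fin.cast h.symm p)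

lemma ofFn_listFn {m : ℕ} (l : List ℕ) (h : l.length = m) :
    List.ofFn (listFn l h) = l := by
  subst h; exact List.ofFn_get l

lemma listFn_mono {m : ℕ} {l : List ℕ} (h : l.length = m) (hs : l.Pairwise (· ≤ ·)) :
    Monotone (listFn l h) := by
  subst h; exact fun _ _ hab => hs.rel_get_of_le hab

lemma listFn_mem {m : ℕ} (l : List ℕ) (h : l.length = m) (p : Fin m) :
    listFn l h p ∈ l := by
  rw [show listFn l h p = l.get (Fin.cast h.symm p) from rfl, List.get_eq_getElem]
  exact List.getElem_mem _

lemma count_listFn {m : ℕ} (l : List ℕ) (h : l.length = m) (k : ℕ) :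
    (Finset.univ.filter fun p => listFn l h p = k).card = l.count k := by
  rw [card_filter_eq_count, ofFn_listFn]

def M (b i x : ℕ) : Multiset ℕ := (Multiset.Icc 2 (b-1) + (i ::ₘ {i})).erase x

lemma mem_M {b i x y : ℕ} (hi : 2 ≤ i) (hib : i ≤ b - 1) (hy : y ∈ M b i x) :
    2 ≤ y ∧ y ≤ b - 1 := by
  have := Multiset.mem_of_mem_erase hy
  rw [Multiset.mem_add] at this
  rcases this with h | h
  · exact Multiset.mem_Icc.1 h
  · simp only [Multiset.mem_cons, Multiset.mem_singleton] at h
    rcases h with rfl | rfl <;> exact ⟨hi, hib⟩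

lemma x_mem {b i x : ℕ} (hx : 2 ≤ x) (hxb : x ≤ b - 1) :
    x ∈ Multiset.Icc 2 (b-1) + (i ::ₘ {i}) := by
  rw [Multiset.mem_add]; left; exact Multiset.mem_Icc.2 ⟨hx, hxb⟩

lemma count_base (b i k : ℕ) :
    (Multiset.Icc 2 (b-1) + (i ::ₘ {i})).count k
      = (if 2 ≤ k ∧ k ≤ b-1 then 1 else 0) + (if k = i then 2 else 0) := by
  rw [Multiset.count_add]
  congr 1
  · by_cases h : 2 ≤ k ∧ k ≤ b - 1
    · rw [if_pos h]
      exact Multiset.count_eq_one_of_mem (Multiset.nodup_Icc) (Multiset.mem_Icc.2 h)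
    · rw [if_neg h, Multiset.count_eq_zero]
      intro hk; exact h (Multiset.mem_Icc.1 hk)
  · by_cases h : k = i
    · subst h; simp [Multiset.count_cons, Multiset.count_singleton]
    · simp [Multiset.count_cons, Multiset.count_singleton, h]

lemma count_M {b i x : ℕ} (hx : 2 ≤ x) (hxb : x ≤ b - 1) (k : ℕ) :
    (M b i x).count k + (if k = x then 1 else 0)
      = (if 2 ≤ k ∧ k ≤ b-1 then 1 else 0) + (if k = i then 2 else 0) := by
  rw [← count_base b i k]
  unfold M
  by_cases h : k = x
  · subst h
    rw [if_pos rfl, Multiset.count_erase_self]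
    have h1 : 1 ≤ (Multiset.Icc 2 (b-1) + (i ::ₘ {i})).count k :=
      Multiset.one_le_count_iff_mem.2 (x_mem hx hxb)
    omega
  · rw [if_neg h, Multiset.count_erase_of_ne h, Nat.add_zero]

lemma card_M {b i x : ℕ} (hb : 3 ≤ b) (hx : 2 ≤ x) (hxb : x ≤ b - 1) :
    Multiset.card (M b i x) = b - 1 := by
  unfold M
  rw [Multiset.card_erase_of_mem (x_mem hx hxb)]
  have : Multiset.card (Multiset.Icc 2 (b-1)) = b - 1 + 1 - 2 := by
    rw [show Multiset.Icc 2 (b-1) = (Finset.Icc 2 (b-1)).val from rfl,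
      ← Finset.card_def, Nat.card_Icc]
  simp only [Multiset.card_add, this]
  simp [Multiset.card_cons]
  omega

def L1 (a x : ℕ) : List ℕ := List.replicate a 1 ++ [x]

lemma len_L1 (a x : ℕ) : (L1 a x).length = a + 1 := by simp [L1]

lemma sorted_L1 (a x : ℕ) (hx : 1 ≤ x) : (L1 a x).Pairwise (· ≤ ·) := by
  unfold L1
  rw [List.pairwise_append]
  refine ⟨List.pairwise_replicate.2 (by simp), by simp, ?_⟩
  intro y hy z hz
  rw [List.mem_replicate] at hy
  simp at hz
  omega

lemma count_L1 (a x k : ℕ) :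
    (L1 a x).count k = (if k = 1 then a else 0) + (if k = x then 1 else 0) := by
  unfold L1
  rw [List.count_append, List.count_replicate, List.count_singleton]
  split_ifs <;> simp_all

lemma mem_L1 {a x y : ℕ} (hy : y ∈ L1 a x) : y = 1 ∨ y = x := by
  unfold L1 at hy
  rw [List.mem_append, List.mem_replicate] at hy
  simp at hy
  tauto

def L2 (b i x : ℕ) : List ℕ := (M b i x).sort (· ≤ ·)

lemma len_L2 {b i x : ℕ} (hb : 3 ≤ b) (hx : 2 ≤ x) (hxb : x ≤ b - 1) :
    (L2 b i x).length = b - 1 := by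
  rw [L2, Multiset.length_sort]; exact card_M hb hx hxb

lemma count_L2 (b i x k : ℕ) : (L2 b i x).count k = (M b i x).count k := by
  rw [L2, ← Multiset.coe_count, Multiset.sort_eq]

lemma mem_L2 {b i x y : ℕ} (hi : 2 ≤ i) (hib : i ≤ b - 1) (hy : y ∈ L2 b i x) :
    2 ≤ y ∧ y ≤ b - 1 := mem_M hi hib ((Multiset.mem_sort _).1 hy)

/-- The model tableau with last entry of the first row equal to `x`. -/
def Tab (a b i n x : ℕ) (hb : 3 ≤ b) (hi : 2 ≤ i) (hib : i ≤ b - 1)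
    (hμ : b - 1 < a + 1) (hn : a + b ≤ n) (hx : 2 ≤ x) (hxb : x ≤ b - 1) :
    TwoRowStandardTableau (a + 1) (b - 1) n where
  row1 := listFn (L1 a x) (len_L1 a x)
  row2 := listFn (L2 b i x) (len_L2 hb hx hxb)
  row1_mem := by
    intro p
    rcases mem_L1 (listFn_mem (L1 a x) (len_L1 a x) p) with h | h <;> rw [h] <;> omega
  row2_mem := by
    intro p
    have := mem_L2 hi hib (listFn_mem (L2 b i x) (len_L2 hb hx hxb) p)
    omega
  row1_mono := listFn_mono _ (sorted_L1 a x (by omega))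
  row2_mono := listFn_mono _ (Multiset.pairwise_sort _ _)
  col_strict := by
    intro p h
    have h2 := mem_L2 hi hib (listFn_mem (L2 b i x) (len_L2 hb hx hxb) p)
    have h1 : listFn (L1 a x) (len_L1 a x) ⟨(p : ℕ), h⟩ = 1 := by
      have hp : (p : ℕ) < a := by have := p.2; omega
      show (L1 a x).get _ = 1
      simp only [L1, List.get_eq_getElem]
      rw [List.getElem_append_left (by simp; exact hp)]
      simp
    rw [h1]; omega

lemma Tab_content (a b i n x : ℕ) (hb : 3 ≤ b) (hi : 2 ≤ i) (hib : i ≤ b - 1)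
    (hμ : b - 1 < a + 1) (hn : a + b ≤ n) (hx : 2 ≤ x) (hxb : x ≤ b - 1) (k : ℕ) :
    (Tab a b i n x hb hi hib hμ hn hx hxb).content k =
      if k = 1 then a else if k = i then 3 else if 2 ≤ k ∧ k ≤ b - 1 then 1 else 0 := by
  rw [TwoRowStandardTableau.content]
  show (Finset.univ.filter fun p => listFn (L1 a x) (len_L1 a x) p = k).card
    + (Finset.univ.filter fun p => listFn (L2 b i x) (len_L2 hb hx hxb) p = k).card = _
  rw [count_listFn, count_listFn, count_L1, count_L2]
  have hM := count_M (i := i) hx hxb k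
  split_ifs at * <;> omega

lemma Tab_last (a b i n x : ℕ) (hb : 3 ≤ b) (hi : 2 ≤ i) (hib : i ≤ b - 1)
    (hμ : b - 1 < a + 1) (hn : a + b ≤ n) (hx : 2 ≤ x) (hxb : x ≤ b - 1) :
    (Tab a b i n x hb hi hib hμ hn hx hxb).row1 ⟨a, by omega⟩ = x := by
  show (L1 a x).get _ = x
  simp only [L1, List.get_eq_getElem]
  have : (List.replicate a 1).length = a := by simp
  rw [List.getElem_append_right (by simp; exact le_rfl)]
  simp

lemma key (a b i n : ℕ) (hb : 3 ≤ b) (hi : 2 ≤ i) (hib : i ≤ b - 1)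
    (hμ : b - 1 < a + 1) (hn : a + b ≤ n)
    (T : TwoRowStandardTableau (a + 1) (b - 1) n)
    (hT : ∀ k, T.content k =
      if k = 1 then a else if k = i then 3 else if 2 ≤ k ∧ k ≤ b - 1 then 1 else 0) :
    ∃ (hx : 2 ≤ T.row1 ⟨a, by omega⟩) (hxb : T.row1 ⟨a, by omega⟩ ≤ b - 1),
      T = Tab a b i n (T.row1 ⟨a, by omega⟩) hb hi hib hμ hn hx hxb := by
  classical
  set last : Fin (a + 1) := ⟨a, by omega⟩ with hlastdef
  set x := T.row1 last with hxdef
  have hrow2ge : ∀ p : Fin (b - 1), 2 ≤ T.row2 p := by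
    intro p
    have hp : (p : ℕ) < a + 1 := by have := p.2; omega
    have h1 := T.col_strict p hp
    have h2 := (T.row1_mem ⟨(p : ℕ), hp⟩).1
    omega
  have hr2c1 : (Finset.univ.filter fun p => T.row2 p = 1).card = 0 := by
    rw [Finset.card_eq_zero, Finset.filter_eq_empty_iff]
    intro p _
    have := hrow2ge p; omega
  have hr1c1 : (Finset.univ.filter fun p => T.row1 p = 1).card = a := by
    have h := hT 1
    rw [TwoRowStandardTableau.content] at h
    norm_num at h
    omega
  have hcard_ne : (Finset.univ.filter fun p => ¬ T.row1 p = 1).card = 1 := by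
    have h := Finset.card_filter_add_card_filter_not
      (s := (Finset.univ : Finset (Fin (a + 1)))) (p := fun p => T.row1 p = 1)
    rw [Finset.card_univ, Fintype.card_fin] at h
    omega
  have hxne1 : ¬ x = 1 := by
    intro h
    have hall : ∀ p : Fin (a + 1), T.row1 p = 1 := by
      intro p
      have hle : p ≤ last := by
        rw [Fin.le_def]
        have := p.2
        simp only [hlastdef]
        omega
      have h1 := T.row1_mono hle
      have h2 := (T.row1_mem p).1
      rw [← hxdef, h] at h1
      omega
    have heq : (Finset.univ.filter fun p => T.row1 p = 1) = Finset.univ :=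
      Finset.filter_true_of_mem (fun p _ => hall p)
    rw [heq, Finset.card_univ, Fintype.card_fin] at hr1c1
    omega
  have hx2 : 2 ≤ x := by
    have := (T.row1_mem last).1
    omega
  have hsing : (Finset.univ.filter fun p => ¬ T.row1 p = 1) = {last} := by
    obtain ⟨c, hc⟩ := Finset.card_eq_one.1 hcard_ne
    have hmem : last ∈ Finset.univ.filter fun p => ¬ T.row1 p = 1 :=
      Finset.mem_filter.2 ⟨Finset.mem_univ _, hxne1⟩
    rw [hc] at hmem ⊢
    rw [Finset.mem_singleton] at hmem
    rw [hmem]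
  have hrow1_eq1 : ∀ p : Fin (a + 1), p ≠ last → T.row1 p = 1 := by
    intro p hp
    by_contra h
    have : p ∈ Finset.univ.filter fun p => ¬ T.row1 p = 1 :=
      Finset.mem_filter.2 ⟨Finset.mem_univ _, h⟩
    rw [hsing, Finset.mem_singleton] at this
    exact hp this
  have hr1ck : ∀ k, k ≠ 1 →
      (Finset.univ.filter fun p => T.row1 p = k).card = if k = x then 1 else 0 := by
    intro k hk
    by_cases hkx : k = x
    · subst hkx
      rw [if_pos rfl]
      have : (Finset.univ.filter fun p => T.row1 p = x) = {last} := by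
        apply Finset.eq_singleton_iff_unique_mem.2
        refine ⟨Finset.mem_filter.2 ⟨Finset.mem_univ _, hxdef.symm⟩, ?_⟩
        intro p hp
        by_contra hne
        have h1 := (Finset.mem_filter.1 hp).2
        rw [hrow1_eq1 p hne] at h1
        exact hxne1 h1.symm
      rw [this, Finset.card_singleton]
    · rw [if_neg hkx, Finset.card_eq_zero, Finset.filter_eq_empty_iff]
      intro p _
      by_cases hp : p = last
      · subst hp
        rw [← hxdef]
        exact fun h => hkx h.symm
      · rw [hrow1_eq1 p hp]
        exact fun h => hk h.symm
  have hxb : x ≤ b - 1 := by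
    by_contra h
    have hc := hT x
    rw [TwoRowStandardTableau.content] at hc
    rw [hr1ck x hxne1, if_pos rfl] at hc
    have hxi : ¬ x = i := by omega
    rw [if_neg hxne1, if_neg hxi, if_neg (by omega : ¬ (2 ≤ x ∧ x ≤ b - 1))] at hc
    omega
  refine ⟨hx2, hxb, ?_⟩
  have hrow1 : T.row1 = (Tab a b i n x hb hi hib hμ hn hx2 hxb).row1 := by
    apply mono_eq_of_count T.row1_mono (Tab a b i n x hb hi hib hμ hn hx2 hxb).row1_mono
    intro k
    have hR : (Finset.univ.filter fun p =>
        (Tab a b i n x hb hi hib hμ hn hx2 hxb).row1 p = k).card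
        = (if k = 1 then a else 0) + (if k = x then 1 else 0) := by
      show (Finset.univ.filter fun p => listFn (L1 a x) (len_L1 a x) p = k).card = _
      rw [count_listFn, count_L1]
    rw [hR]
    by_cases hk : k = 1
    · subst hk
      rw [hr1c1, if_pos rfl, if_neg (fun h => hxne1 h.symm)]
      omega
    · rw [hr1ck k hk, if_neg hk, Nat.zero_add]
  have hrow2 : T.row2 = (Tab a b i n x hb hi hib hμ hn hx2 hxb).row2 := by
    apply mono_eq_of_count T.row2_mono (Tab a b i n x hb hi hib hμ hn hx2 hxb).row2_mono
    intro k
    have h1 := hT k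
    have h2 := Tab_content a b i n x hb hi hib hμ hn hx2 hxb k
    rw [TwoRowStandardTableau.content] at h1 h2
    have h3 : (Finset.univ.filter fun p => T.row1 p = k).card
        = (Finset.univ.filter fun p =>
            (Tab a b i n x hb hi hib hμ hn hx2 hxb).row1 p = k).card := by
      rw [hrow1]
    omega
  exact tableau_ext hrow1 hrow2

end Stmt12Aux

open Stmt12Aux in
/-- The number of standard tableaux of shape `μ = (a+1, b-1)` and content
`wᵢ = (a, 1^{i-2}, 3, 1^{b-1-i})` (entry `1` appearing `a` times, entry `i` three times, and
every other entry of `{2, …, b-1}` once) is `b - 2`. -/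
theorem stmt_12 (a b i n : ℕ) (hb : 3 ≤ b) (hi : 2 ≤ i) (hib : i ≤ b - 1)
    (hμ : b - 1 < a + 1) (hn : a + b ≤ n) :
    Nat.card {T : TwoRowStandardTableau (a + 1) (b - 1) n //
      ∀ k, T.content k =
        if k = 1 then a else if k = i then 3 else if 2 ≤ k ∧ k ≤ b - 1 then 1 else 0} =
      b - 2 := by
  classical
  have hcard : Nat.card ((Finset.Icc 2 (b-1) : Finset ℕ)) = b - 2 := by
    rw [Nat.card_eq_finsetCard, Nat.card_Icc]; omega
  let g : ((Finset.Icc 2 (b-1) : Finset ℕ) : Type) →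
      {T : TwoRowStandardTableau (a + 1) (b - 1) n //
      ∀ k, T.content k =
        if k = 1 then a else if k = i then 3 else if 2 ≤ k ∧ k ≤ b - 1 then 1 else 0} :=
    fun y => ⟨Tab a b i n y.1 hb hi hib hμ hn (Finset.mem_Icc.1 y.2).1 (Finset.mem_Icc.1 y.2).2,
      fun k => Tab_content a b i n y.1 hb hi hib hμ hn _ _ k⟩
  have hbij : Function.Bijective g := by
    constructor
    · intro y y' h
      have h1 := congrArg (fun T => T.1.row1 ⟨a, by omega⟩) h
      simp only [g] at h1
      rw [Tab_last, Tab_last] at h1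
      exact Subtype.ext h1
    · rintro ⟨T, hT⟩
      obtain ⟨hx, hxb, hTeq⟩ := key a b i n hb hi hib hμ hn T hT
      refine ⟨⟨T.row1 ⟨a, by omega⟩, Finset.mem_Icc.2 ⟨hx, hxb⟩⟩, ?_⟩
      exact Subtype.ext hTeq.symm
  rw [← Nat.card_eq_of_bijective g hbij, hcard]
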